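/- For each integer n ≥ 2, one has F_{n-1,n}(w) = G_{n-1}(w+x) / (w(w+(n-1)z)). -/
import Mathlib


open Finset MvPolynomial

noncomputable section

/-- The field of rational functions in three variables `w, x, z` over `ℚ`. -/
abbrev F3 : Type := FractionRing (MvPolynomial (Fin 3) ℚ)

/-- the variable `w` -/
def W : F3 := algebraMap (MvPolynomial (Fin 3) ℚ) F3 (X 0)
/-- the variable `x` -/
def Xv : F3 := algebraMap (MvPolynomial (Fin 3) ℚ) F3 (X 1)
/-- the variable `z` -/
def Zv : F3 := algebraMap (MvPolynomial (Fin 3) ℚ) F3 (X 2)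

/-- `G_n(w)`, defined by `G_1(w) = 1/w` and, for `n ≥ 2`,
`G_n(w) = ∑_{k=1}^{n-1} G_k(w) G_{n-k}(w+kz) / (w+(n-1)x)`. -/
def G : ℕ → F3 → F3
  | 0, _ => 0
  | 1, w => 1 / w
  | (n + 2), w =>
      ∑ k ∈ (Finset.Icc 1 (n + 1)).attach,
        G k.1 w * G (n + 2 - k.1) (w + (k.1 : F3) * Zv) / (w + ((n + 1 : ℕ) : F3) * Xv)
  termination_by n _ => n
  decreasing_by
  · have := Finset.mem_Icc.mp k.2; omega
  · have := Finset.mem_Icc.mp k.2; omega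

/-- `F_{k,n}(w)` for `1 ≤ k < n`, defined by `F_{1,n}(w) = G_n(w)` and, for `k ≥ 2`,
`F_{k,n}(w) = ∑_{i=1}^{n-k-1} G_{n-k-i}(w+(k+i)z) F_{k,k+i}(w) / (w+(n-1)x)
  + ∑_{i=1}^{k-1} (w+iz) G_i(w+x) F_{k-i,n-i}(w+iz) / (w(w+(n-1)x))`. -/
def Fkn : ℕ → ℕ → F3 → F3
  | 0, _, _ => 0
  | 1, n, w => G n w
  | (j + 2), n, w =>
      (∑ i ∈ (Finset.Icc 1 (n - (j + 2) - 1)).attach,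
        G (n - (j + 2) - i.1) (w + (((j + 2) + i.1 : ℕ) : F3) * Zv) * Fkn (j + 2) ((j + 2) + i.1) w /
          (w + ((n - 1 : ℕ) : F3) * Xv)) +
      ∑ i ∈ (Finset.Icc 1 (j + 1)).attach,
        (w + (i.1 : F3) * Zv) * G i.1 (w + Xv) * Fkn ((j + 2) - i.1) (n - i.1) (w + (i.1 : F3) * Zv) /
          (w * (w + ((n - 1 : ℕ) : F3) * Xv))
  termination_by k n _ => k + n
  decreasing_by
  · have := Finset.mem_Icc.mp i.2; omega
  · have := Finset.mem_Icc.mp i.2; omega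

lemma WZ_ne (m : ℕ) : W + (m : F3) * Zv ≠ 0 := by
  intro h
  have h1 : (algebraMap (MvPolynomial (Fin 3) ℚ) F3)
      (X 0 + (m : MvPolynomial (Fin 3) ℚ) * X 2) = 0 := by
    rw [map_add, map_mul, map_natCast]; exact h
  have h2 : (X 0 + (m : MvPolynomial (Fin 3) ℚ) * X 2 : MvPolynomial (Fin 3) ℚ) = 0 :=
    IsFractionRing.injective (MvPolynomial (Fin 3) ℚ) F3 (by simpa using h1)
  have h3 := congrArg (MvPolynomial.eval (fun i : Fin 3 => if i = 0 then (1:ℚ) else 0)) h2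
  simp at h3

lemma div_aux (A B D P Q w : F3) (hA : A ≠ 0) :
    A * P * (Q / (A * B)) / (w * D) = P * Q / D / (w * B) := by
  simp only [div_eq_mul_inv, mul_inv]
  rw [show A * P * (Q * (A⁻¹ * B⁻¹)) * (w⁻¹ * D⁻¹)
      = (A * A⁻¹) * (P * Q * B⁻¹ * w⁻¹ * D⁻¹) from by ring,
    mul_inv_cancel₀ hA, one_mul]
  ring


set_option maxHeartbeats 2000000 in
lemma aux (j : ℕ) : ∀ m : ℕ,
    Fkn (j+1) (j+2) (W + (m:F3)*Zv) =
      G (j+1) (W + (m:F3)*Zv + Xv) /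
        ((W + (m:F3)*Zv) * (W + (m:F3)*Zv + ((j+1 : ℕ):F3)*Zv)) := by
  induction j using Nat.strong_induction_on with
  | _ j ih =>
  intro m
  cases j with
  | zero =>
    show Fkn 1 2 (W + (m:F3)*Zv) =
      G 1 (W + (m:F3)*Zv + Xv) /
        ((W + (m:F3)*Zv) * (W + (m:F3)*Zv + ((1:ℕ):F3)*Zv))
    set w : F3 := W + (m:F3)*Zv with hw
    rw [Fkn, show (2:ℕ) = 0 + 2 from rfl, G.eq_3,
      Finset.sum_attach (Finset.Icc 1 1) (fun k : ℕ => G k w * G (0 + 2 - k) (w + (k : F3) * Zv) /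
        (w + ((0 + 1 : ℕ) : F3) * Xv))]
    rw [show Finset.Icc 1 1 = {1} from rfl, Finset.sum_singleton]
    simp only [G, Nat.cast_one, Nat.cast_ofNat, one_mul]
    norm_num
    simp only [G, one_div, div_eq_mul_inv, mul_inv]
    ring
  | succ j' =>
    show Fkn (j'+2) (j'+3) (W + (m:F3)*Zv) =
      G (j'+2) (W + (m:F3)*Zv + Xv) /
        ((W + (m:F3)*Zv) * (W + (m:F3)*Zv + ((j'+2:ℕ):F3)*Zv))
    set w : F3 := W + (m:F3)*Zv with hw
    rw [Fkn.eq_3]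
    simp only [show (j'+3) - 1 = j'+2 from rfl]
    rw [Finset.sum_attach (Finset.Icc 1 ((j'+3) - (j'+2) - 1)) (fun i : ℕ =>
      G ((j'+3) - (j'+2) - i) (w + (((j'+2) + i : ℕ) : F3) * Zv) * Fkn (j'+2) ((j'+2) + i) w /
        (w + ((j'+2:ℕ):F3) * Xv))]
    simp only [show (j'+3) - (j'+2) - 1 = 0 from by omega,
      show Finset.Icc 1 0 = (∅ : Finset ℕ) from Finset.Icc_eq_empty (by omega),
      Finset.sum_empty, zero_add]
    rw [Finset.sum_attach (Finset.Icc 1 (j'+1)) (fun i : ℕ => (w + (i:F3)*Zv) * G i (w+Xv) *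
      Fkn ((j'+2) - i) ((j'+3) - i) (w + (i:F3)*Zv) / (w * (w + ((j'+2:ℕ):F3) * Xv)))]
    rw [G.eq_3,
      Finset.sum_attach (Finset.Icc 1 (j'+1)) (fun k : ℕ => G k (w+Xv) * G ((j'+2) - k) ((w+Xv) + (k:F3)*Zv) /
        ((w+Xv) + ((j'+1:ℕ):F3) * Xv)),
      Finset.sum_div (Finset.Icc 1 (j'+1)) (fun k : ℕ => G k (w+Xv) *
        G ((j'+2) - k) ((w+Xv) + (k:F3)*Zv) / ((w+Xv) + ((j'+1:ℕ):F3) * Xv))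
        (w * (w + ((j'+2:ℕ):F3)*Zv))]
    apply Finset.sum_congr rfl
    intro i hi
    obtain ⟨hi1, hi2⟩ := Finset.mem_Icc.mp hi
    obtain ⟨a, ha⟩ : ∃ a, i + (a + 1) = j' + 2 := ⟨j'+1-i, by omega⟩
    have e1 : W + ((m+i:ℕ):F3)*Zv = w + (i:F3)*Zv := by rw [hw]; push_cast; ring
    have hF := ih a (by omega) (m+i)
    rw [e1] at hF
    have e2 : w + (i:F3)*Zv + ((a+1:ℕ):F3)*Zv = w + ((j'+2:ℕ):F3)*Zv := by
      rw [← ha]; push_cast; ring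
    rw [e2] at hF
    rw [show (j'+2) - i = a + 1 from by omega, show (j'+3) - i = a + 2 from by omega, hF]
    rw [show w + (i:F3)*Zv + Xv = w + Xv + (i:F3)*Zv from by ring]
    rw [show w + Xv + ((j'+1:ℕ):F3)*Xv = w + ((j'+2:ℕ):F3)*Xv from by push_cast; ring]
    exact div_aux _ _ _ _ _ _ (by rw [← e1]; exact WZ_ne (m+i))

/-- For each `n ≥ 2`, `F_{n-1,n}(w) = G_{n-1}(w+x) / (w(w+(n-1)z))`. -/
theorem F_pred_n (n : ℕ) (hn : 2 ≤ n) :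
    Fkn (n - 1) n W = G (n - 1) (W + Xv) / (W * (W + ((n - 1 : ℕ) : F3) * Zv)) := by
  obtain ⟨j, rfl⟩ : ∃ j, n = j + 2 := ⟨n - 2, by omega⟩
  have h := aux j 0
  simp only [Nat.cast_zero, zero_mul, add_zero] at h
  rw [show j + 2 - 1 = j + 1 from rfl]
  exact h

end
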